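/- Let d ≥ 1 be an integer and let p : ℝ × ℝ^d → ℝ and u : ℝ × ℝ^d → ℝ^d be continuously differentiable with p(t,x) > 0 everywhere. If (p,u) is a classical solution of the ultra-relativistic Euler equations, i.e. ∂_t W_α(p,u) + Σ_{k=1}^d ∂_{x_k} F_k^{(α)}(p,u) = 0 pointwise for every α = 1,…,d+1, then the entropy is conserved: ∂_t η(p,u) + Σ_{k=1}^d ∂_{x_k} q_k(p,u) = 0 pointwise. -/

import Mathlib

open Real Finset

/-- Conservative variables `W(p,u)` of the ultra-relativistic Euler equations. -/
noncomputable def consVars (d : ℕ) (p : ℝ) (u : Fin d → ℝ) : Fin (d + 1) → ℝ :=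
  Fin.snoc (fun j => 4 * p * u j * Real.sqrt (1 + ∑ i, u i ^ 2))
    (p * (3 + 4 * ∑ i, u i ^ 2))

/-- Exact fluxes `F_k` of the ultra-relativistic Euler equations. -/
noncomputable def flux (d : ℕ) (k : Fin d) (p : ℝ) (u : Fin d → ℝ) : Fin (d + 1) → ℝ :=
  Fin.snoc (fun i => p * (if i = k then 1 else 0) + 4 * p * u i * u k)
    (4 * p * u k * Real.sqrt (1 + ∑ j, u j ^ 2))

/-- Entropy `η(p,u) = p^{3/4} √(1+|u|²)`. -/
noncomputable def entropy (d : ℕ) (p : ℝ) (u : Fin d → ℝ) : ℝ :=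
  p ^ ((3 : ℝ) / 4) * Real.sqrt (1 + ∑ j, u j ^ 2)

/-- Entropy fluxes `q_k(p,u) = p^{3/4} u_k`. -/
noncomputable def entropyFlux (d : ℕ) (k : Fin d) (p : ℝ) (u : Fin d → ℝ) : ℝ :=
  p ^ ((3 : ℝ) / 4) * u k


section helpers
variable {d : ℕ} {P : ℝ → ℝ} {U : ℝ → Fin d → ℝ} {t A : ℝ} {B : Fin d → ℝ}

lemma hd_sumsq (hU : ∀ i, HasDerivAt (fun τ => U τ i) (B i) t) :
    HasDerivAt (fun τ => ∑ i, U τ i ^ 2) (2 * ∑ i, U t i * B i) t := by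
  have h : HasDerivAt (fun τ => ∑ i : Fin d, U τ i ^ 2)
      (∑ i : Fin d, (2 : ℝ) * U t i ^ (2 - 1) * B i) t :=
    HasDerivAt.fun_sum fun i _ => (hU i).fun_pow 2
  convert h using 1
  rw [Finset.mul_sum]
  exact Finset.sum_congr rfl fun i _ => by norm_num; ring

lemma hd_sqrt (hU : ∀ i, HasDerivAt (fun τ => U τ i) (B i) t) :
    HasDerivAt (fun τ => Real.sqrt (1 + ∑ i, U τ i ^ 2))
      ((∑ i, U t i * B i) / Real.sqrt (1 + ∑ i, U t i ^ 2)) t := by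
  have hm : (0:ℝ) < 1 + ∑ i, U t i ^ 2 := by positivity
  have h1 : HasDerivAt (fun τ => 1 + ∑ i, U τ i ^ 2) (2 * ∑ i, U t i * B i) t :=
    (hd_sumsq hU).const_add 1
  have h2 := (Real.hasDerivAt_sqrt hm.ne').comp t h1
  simp only [Function.comp_def] at h2
  refine h2.congr_deriv ?_
  have hs : Real.sqrt (1 + ∑ i, U t i ^ 2) ≠ 0 := by positivity
  field_simp

lemma hd_rpow (hP : HasDerivAt P A t) (h0 : 0 < P t) :
    HasDerivAt (fun τ => P τ ^ ((3:ℝ)/4)) ((3/4) * P t ^ (-(1:ℝ)/4) * A) t := by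
  have h := hP.rpow_const (p := (3:ℝ)/4) (Or.inl h0.ne')
  convert h using 1
  rw [show -(1:ℝ)/4 = (3:ℝ)/4 - 1 by norm_num]
  ring

lemma hd_entropy (hP : HasDerivAt P A t) (hU : ∀ i, HasDerivAt (fun τ => U τ i) (B i) t)
    (h0 : 0 < P t) :
    HasDerivAt (fun τ => entropy d (P τ) (U τ))
      ((3/4) * P t ^ (-(1:ℝ)/4) * Real.sqrt (1 + ∑ i, U t i ^ 2) * A
        + P t ^ ((3:ℝ)/4) * (∑ i, U t i * B i) / Real.sqrt (1 + ∑ i, U t i ^ 2)) t := by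
  unfold entropy
  have h := (hd_rpow hP h0).fun_mul (hd_sqrt hU)
  refine h.congr_deriv ?_
  ring

lemma hd_W (j : Fin d) (hP : HasDerivAt P A t)
    (hU : ∀ i, HasDerivAt (fun τ => U τ i) (B i) t) :
    HasDerivAt (fun τ => consVars d (P τ) (U τ) (Fin.castSucc j))
      (4 * (A * U t j * Real.sqrt (1 + ∑ i, U t i ^ 2)
        + P t * B j * Real.sqrt (1 + ∑ i, U t i ^ 2)
        + P t * U t j * (∑ i, U t i * B i) / Real.sqrt (1 + ∑ i, U t i ^ 2))) t := by
  simp only [consVars, Fin.snoc_castSucc]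
  have h := ((hP.const_mul (4:ℝ)).fun_mul (hU j)).fun_mul (hd_sqrt hU)
  refine h.congr_deriv ?_
  ring

lemma hd_Wlast (hP : HasDerivAt P A t)
    (hU : ∀ i, HasDerivAt (fun τ => U τ i) (B i) t) :
    HasDerivAt (fun τ => consVars d (P τ) (U τ) (Fin.last d))
      (A * (3 + 4 * ∑ i, U t i ^ 2) + 8 * P t * ∑ i, U t i * B i) t := by
  simp only [consVars, Fin.snoc_last]
  have h := hP.fun_mul (((hd_sumsq hU).const_mul (4:ℝ)).const_add 3)
  refine h.congr_deriv ?_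
  ring

lemma hd_F (k j : Fin d) (hP : HasDerivAt P A t)
    (hU : ∀ i, HasDerivAt (fun τ => U τ i) (B i) t) :
    HasDerivAt (fun τ => flux d k (P τ) (U τ) (Fin.castSucc j))
      (A * ((if j = k then 1 else 0) + 4 * U t j * U t k)
        + 4 * P t * (B j * U t k + U t j * B k)) t := by
  simp only [flux, Fin.snoc_castSucc]
  have h := (hP.mul_const (if j = k then (1:ℝ) else 0)).fun_add
    (((hP.const_mul (4:ℝ)).fun_mul (hU j)).fun_mul (hU k))
  refine h.congr_deriv ?_
  ring

lemma hd_Flast (k : Fin d) (hP : HasDerivAt P A t)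
    (hU : ∀ i, HasDerivAt (fun τ => U τ i) (B i) t) :
    HasDerivAt (fun τ => flux d k (P τ) (U τ) (Fin.last d))
      (4 * (A * U t k * Real.sqrt (1 + ∑ i, U t i ^ 2)
        + P t * B k * Real.sqrt (1 + ∑ i, U t i ^ 2)
        + P t * U t k * (∑ i, U t i * B i) / Real.sqrt (1 + ∑ i, U t i ^ 2))) t := by
  simp only [flux, Fin.snoc_last]
  have h := ((hP.const_mul (4:ℝ)).fun_mul (hU k)).fun_mul (hd_sqrt hU)
  refine h.congr_deriv ?_
  ring

lemma hd_q (k : Fin d) (hP : HasDerivAt P A t)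
    (hU : ∀ i, HasDerivAt (fun τ => U τ i) (B i) t) (h0 : 0 < P t) :
    HasDerivAt (fun τ => entropyFlux d k (P τ) (U τ))
      ((3/4) * P t ^ (-(1:ℝ)/4) * U t k * A + P t ^ ((3:ℝ)/4) * B k) t := by
  unfold entropyFlux
  have h := (hd_rpow hP h0).fun_mul (hU k)
  refine h.congr_deriv ?_
  ring

end helpers

/-- Classical (C¹, positive-pressure) solutions of the ultra-relativistic Euler
equations conserve the entropy: `∂_t η + Σ_k ∂_{x_k} q_k = 0` pointwise. -/
theorem classical_solution_entropy_conservation (d : ℕ) (hd : 1 ≤ d)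
    (p : ℝ × (Fin d → ℝ) → ℝ) (u : ℝ × (Fin d → ℝ) → Fin d → ℝ)
    (hp : ContDiff ℝ 1 p) (hu : ContDiff ℝ 1 u)
    (hpos : ∀ z, 0 < p z)
    (hsol : ∀ (t : ℝ) (x : Fin d → ℝ) (α : Fin (d + 1)),
      deriv (fun τ => consVars d (p (τ, x)) (u (τ, x)) α) t +
        ∑ k : Fin d,
          deriv (fun s => flux d k (p (t, Function.update x k s))
            (u (t, Function.update x k s)) α) (x k) = 0) :
    ∀ (t : ℝ) (x : Fin d → ℝ),
      deriv (fun τ => entropy d (p (τ, x)) (u (τ, x))) t +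
        ∑ k : Fin d,
          deriv (fun s => entropyFlux d k (p (t, Function.update x k s))
            (u (t, Function.update x k s))) (x k) = 0 := by
  intro t x
  -- differentiability of the curves
  have hpdiff : Differentiable ℝ p := hp.differentiable one_ne_zero
  have hudiff : Differentiable ℝ u := hu.differentiable one_ne_zero
  have hcurve_t : DifferentiableAt ℝ (fun τ : ℝ => ((τ, x) : ℝ × (Fin d → ℝ))) t :=
    differentiableAt_id.prodMk (differentiableAt_const x)
  have hcurve_s : ∀ k : Fin d, DifferentiableAt ℝ
      (fun s : ℝ => ((t, Function.update x k s) : ℝ × (Fin d → ℝ))) (x k) := by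
    intro k
    refine (differentiableAt_const t).prodMk (differentiableAt_pi.mpr fun i => ?_)
    simp only [Function.update_apply]
    by_cases h : i = k
    · simp [h]
    · simp [h]
  have hPt : DifferentiableAt ℝ (fun τ => p (τ, x)) t :=
    (hpdiff (t, x)).comp t hcurve_t
  have hUt : ∀ i, DifferentiableAt ℝ (fun τ => u (τ, x) i) t := by
    intro i
    have h2 := (hudiff (t, x)).comp t hcurve_t
    exact (differentiableAt_pi.mp h2) i
  have hPk : ∀ k, DifferentiableAt ℝ (fun s => p (t, Function.update x k s)) (x k) :=
    fun k => (hpdiff _).comp (x k) (hcurve_s k)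
  have hUk : ∀ k i, DifferentiableAt ℝ (fun s => u (t, Function.update x k s) i) (x k) := by
    intro k i
    have h2 := (hudiff _).comp (x k) (hcurve_s k)
    exact (differentiableAt_pi.mp h2) i
  -- name the derivative values
  obtain ⟨A, hA⟩ : ∃ A, HasDerivAt (fun τ => p (τ, x)) A t := ⟨_, hPt.hasDerivAt⟩
  choose B hB using fun i => (⟨_, (hUt i).hasDerivAt⟩ :
    ∃ b, HasDerivAt (fun τ => u (τ, x) i) b t)
  choose C hC using fun k => (⟨_, (hPk k).hasDerivAt⟩ :
    ∃ c, HasDerivAt (fun s => p (t, Function.update x k s)) c (x k))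
  choose D hD using fun k i => (⟨_, (hUk k i).hasDerivAt⟩ :
    ∃ e, HasDerivAt (fun s => u (t, Function.update x k s) i) e (x k))
  have hx0 : ∀ k : Fin d, Function.update x k (x k) = x := fun k => Function.update_eq_self k x
  have hppos : 0 < p (t, x) := hpos _
  set p0 : ℝ := p (t, x) with hp0
  set u0 : Fin d → ℝ := u (t, x) with hu0
  set m : ℝ := ∑ i, u0 i ^ 2 with hm
  set s : ℝ := Real.sqrt (1 + m) with hs
  set Q : ℝ := ∑ i, u0 i * B i with hQ
  set S : Fin d → ℝ := fun k => ∑ i, u0 i * D k i with hS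
  set r : ℝ := p0 ^ (-(1:ℝ)/4) with hr
  have hspos : 0 < s := Real.sqrt_pos.mpr (by positivity)
  have hsne : s ≠ 0 := hspos.ne'
  have hs2 : s ^ 2 = 1 + m := Real.sq_sqrt (by positivity)
  have hm2 : m = s ^ 2 - 1 := by rw [hs2]; ring
  have hp34 : p0 ^ ((3:ℝ)/4) = r * p0 := by
    rw [hr]
    nth_rewrite 3 [← Real.rpow_one p0]
    rw [← Real.rpow_add hppos]
    norm_num
  -- the spatial-curve hypotheses, after identifying the base point
  have hDk : ∀ k i, HasDerivAt (fun s' => u (t, Function.update x k s') i) (D k i) (x k) := hD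
  -- derivative identities
  have eW : ∀ j : Fin d, deriv (fun τ => consVars d (p (τ, x)) (u (τ, x)) (Fin.castSucc j)) t
      = 4 * (A * u0 j * s + p0 * B j * s + p0 * u0 j * Q / s) :=
    fun j => (hd_W j hA hB).deriv
  have eWl : deriv (fun τ => consVars d (p (τ, x)) (u (τ, x)) (Fin.last d)) t
      = A * (3 + 4 * m) + 8 * p0 * Q := (hd_Wlast hA hB).deriv
  have eF : ∀ (k j : Fin d), deriv (fun s' => flux d k (p (t, Function.update x k s'))
        (u (t, Function.update x k s')) (Fin.castSucc j)) (x k)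
      = C k * ((if j = k then 1 else 0) + 4 * u0 j * u0 k)
        + 4 * p0 * (D k j * u0 k + u0 j * D k k) := by
    intro k j
    have h := (hd_F (P := fun s' => p (t, Function.update x k s'))
      (U := fun s' => u (t, Function.update x k s')) k j (hC k) (hD k)).deriv
    rw [hx0 k] at h
    exact h
  have eFl : ∀ k : Fin d, deriv (fun s' => flux d k (p (t, Function.update x k s'))
        (u (t, Function.update x k s')) (Fin.last d)) (x k)
      = 4 * (C k * u0 k * s + p0 * D k k * s + p0 * u0 k * S k / s) := by
    intro k
    have h := (hd_Flast (P := fun s' => p (t, Function.update x k s'))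
      (U := fun s' => u (t, Function.update x k s')) k (hC k) (hD k)).deriv
    rw [hx0 k] at h
    exact h
  have eEta : deriv (fun τ => entropy d (p (τ, x)) (u (τ, x))) t
      = (3/4) * r * s * A + p0 ^ ((3:ℝ)/4) * Q / s := (hd_entropy hA hB hppos).deriv
  have eq' : ∀ k : Fin d, deriv (fun s' => entropyFlux d k (p (t, Function.update x k s'))
        (u (t, Function.update x k s'))) (x k)
      = (3/4) * r * u0 k * C k + p0 ^ ((3:ℝ)/4) * D k k := by
    intro k
    have h := (hd_q (P := fun s' => p (t, Function.update x k s'))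
      (U := fun s' => u (t, Function.update x k s')) k (hC k) (hD k)
      (hpos _)).deriv
    rw [hx0 k] at h
    exact h
  -- the conservation laws as scalar equations
  have hEj : ∀ j : Fin d, 4 * (A * u0 j * s + p0 * B j * s + p0 * u0 j * Q / s)
      + ∑ k, (C k * ((if j = k then 1 else 0) + 4 * u0 j * u0 k)
        + 4 * p0 * (D k j * u0 k + u0 j * D k k)) = 0 := by
    intro j
    have h := hsol t x (Fin.castSucc j)
    rw [eW j] at h
    rw [Finset.sum_congr rfl fun k _ => eF k j] at h
    exact h
  have hEl : A * (3 + 4 * m) + 8 * p0 * Q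
      + ∑ k, 4 * (C k * u0 k * s + p0 * D k k * s + p0 * u0 k * S k / s) = 0 := by
    have h := hsol t x (Fin.last d)
    rw [eWl] at h
    rw [Finset.sum_congr rfl fun k _ => eFl k] at h
    exact h
  -- rewrite the goal
  rw [eEta, Finset.sum_congr rfl fun k _ => eq' k]
  -- time-part identity
  have t1 : (3/4) * r * s * A + p0 ^ ((3:ℝ)/4) * Q / s
      = (∑ j, (-(1/4) * r * u0 j) * (4 * (A * u0 j * s + p0 * B j * s + p0 * u0 j * Q / s)))
        + ((1/4) * r * s) * (A * (3 + 4 * m) + 8 * p0 * Q) := by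
    have e : ∀ j ∈ (univ : Finset (Fin d)),
        (-(1/4) * r * u0 j) * (4 * (A * u0 j * s + p0 * B j * s + p0 * u0 j * Q / s))
        = (-(r * A * s) - r * p0 * Q / s) * u0 j ^ 2 + (-(r * p0 * s)) * (u0 j * B j) := by
      intro j _; ring
    rw [Finset.sum_congr rfl e, Finset.sum_add_distrib, ← Finset.mul_sum, ← Finset.mul_sum,
      ← hm, ← hQ, hp34, hm2]
    field_simp
    ring
  -- space-part identity
  have t2 : ∀ k : Fin d, (3/4) * r * u0 k * C k + p0 ^ ((3:ℝ)/4) * D k k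
      = (∑ j, (-(1/4) * r * u0 j) * (C k * ((if j = k then 1 else 0) + 4 * u0 j * u0 k)
          + 4 * p0 * (D k j * u0 k + u0 j * D k k)))
        + ((1/4) * r * s) * (4 * (C k * u0 k * s + p0 * D k k * s + p0 * u0 k * S k / s)) := by
    intro k
    have e : ∀ j ∈ (univ : Finset (Fin d)),
        (-(1/4) * r * u0 j) * (C k * ((if j = k then 1 else 0) + 4 * u0 j * u0 k)
          + 4 * p0 * (D k j * u0 k + u0 j * D k k))
        = (-(1/4) * r * C k) * (if j = k then u0 j else 0)
          + (-(r * C k * u0 k) - r * p0 * D k k) * u0 j ^ 2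
          + (-(r * p0 * u0 k)) * (u0 j * D k j) := by
      intro j _; split_ifs with h <;> ring
    rw [Finset.sum_congr rfl e, Finset.sum_add_distrib, Finset.sum_add_distrib,
      ← Finset.mul_sum, ← Finset.mul_sum, ← Finset.mul_sum, Finset.sum_ite_eq',
      if_pos (Finset.mem_univ k), ← hm,
      show (∑ j, u0 j * D k j) = S k from rfl, hp34, hm2]
    field_simp
    ring
  rw [t1, Finset.sum_congr rfl fun k _ => t2 k]
  rw [Finset.sum_add_distrib, Finset.sum_comm]
  have c1 : (∑ j, (-(1/4) * r * u0 j) * (4 * (A * u0 j * s + p0 * B j * s + p0 * u0 j * Q / s)))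
      + ∑ j, ∑ k, (-(1/4) * r * u0 j) * (C k * ((if j = k then 1 else 0) + 4 * u0 j * u0 k)
          + 4 * p0 * (D k j * u0 k + u0 j * D k k)) = 0 := by
    rw [← Finset.sum_add_distrib]
    apply Finset.sum_eq_zero
    intro j _
    rw [← Finset.mul_sum, ← mul_add, hEj j, mul_zero]
  have c2 : ((1/4) * r * s) * (A * (3 + 4 * m) + 8 * p0 * Q)
      + ∑ k, ((1/4) * r * s) * (4 * (C k * u0 k * s + p0 * D k k * s + p0 * u0 k * S k / s)) = 0 := by
    rw [← Finset.mul_sum, ← mul_add, hEl, mul_zero]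
  linarith [c1, c2]
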